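/- Let p be a prime and R an associative ring in which p = 0 (i.e., an algebra over a field or ring of characteristic p). Then for all x, y in R and every natural number t, the iterated commutator ad_y^{p^t}(x) equals [x, y^{p^t}]. -/

import Mathlib

open LinearMap

private lemma stmt3_key {R : Type*} [Ring R] [CharP R p] (hp : p.Prime) (y : R) :
    (fun a : R => a * y - y * a)^[p] = fun x => x * y ^ p - y ^ p * x := by
  haveI : Fact p.Prime := ⟨hp⟩
  have hfun : (fun a : R => a * y - y * a) =
      ⇑(mulRight ℤ y - mulLeft ℤ y : Module.End ℤ R) := by
    funext a; simp
  have hchar : CharP (Module.End ℤ R) p := by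
    constructor
    intro n
    rw [← CharP.cast_eq_zero_iff R p n]
    constructor
    · intro h
      have := congrArg (fun f : Module.End ℤ R => f 1) h
      simpa [Module.End.natCast_apply, nsmul_eq_mul] using this
    · intro h
      ext m
      simp [Module.End.natCast_apply, nsmul_eq_mul, h]
  funext x
  rw [hfun, ← Module.End.pow_apply, sub_pow_char_of_commute p (LinearMap.commute_mulLeft_right y y).symm]
  simp [pow_mulRight, pow_mulLeft]

/-- In characteristic `p`, `ad_y^{p^t}(x) = [x, y^{p^t}]`. -/
theorem stmt3 {R : Type*} [Ring R] (p : ℕ) (hp : p.Prime) (hchar : (p : R) = 0)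
    (x y : R) (t : ℕ) :
    (fun a => a * y - y * a)^[p ^ t] x = x * y ^ (p ^ t) - y ^ (p ^ t) * x := by
  rcases subsingleton_or_nontrivial R with hR | hR
  · exact Subsingleton.elim _ _
  haveI : CharP R p := (CharP.ringChar_of_prime_eq_zero hp hchar) ▸ ringChar.charP R
  induction t generalizing x y with
  | zero => simp
  | succ t ih =>
    rw [pow_succ', Function.iterate_mul, stmt3_key hp y, show
      (fun x : R => x * y ^ p - y ^ p * x) = (fun a : R => a * (y ^ p) - (y ^ p) * a) from rfl,
      ih x (y ^ p), ← pow_mul, ← pow_succ']
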